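/- In the setting of the slope factorization, every F ∈ S^≤ satisfies F = [F₂]_{<p} · [F₁]_{≥p}, where Δ(F) = F₁ ⊗ F₂ in Sweedler notation, [F₂]_{<p} ∈ S⁻_{(-∞,p)} and [F₁]_{≥p} ∈ S⁻_{[p,∞]} are the projections defined via the perfect restricted pairings. -/
import Mathlib


/-!
STATEMENT 6: In the slope-factorization setting, every `F ∈ S^≤` (here the
bialgebra `B`) satisfies `F = [F₂]_{<p} · [F₁]_{≥p}` in Sweedler notation
`Δ(F) = F₁ ⊗ F₂`, i.e. `mul ∘ ([·]_{<p} ⊗ [·]_{≥p}) ∘ swap ∘ Δ = id`, where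
`[F]_{<p} ∈ B₁ = S⁻_{(-∞,p)}` and `[F]_{≥p} ∈ B₂ = S⁻_{[p,∞]}` are the
projections defined via the perfect restricted pairings with
`A₁ = S⁺_{(-∞,p)}` and `A₂ = S⁺_{[p,∞]}`.
-/

open TensorProduct

/-- `pair2' p (b₁ ⊗ b₂) (a₁ ⊗ a₂) = ⟨a₁,b₁⟩⟨a₂,b₂⟩`. -/
noncomputable def pair2' {K A B : Type*} [CommRing K] [AddCommGroup A] [Module K A]
    [AddCommGroup B] [Module K B] (p : A →ₗ[K] Module.Dual K B) :
    B ⊗[K] B →ₗ[K] Module.Dual K (A ⊗[K] A) :=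
  (TensorProduct.dualDistrib K A A) ∘ₗ (TensorProduct.map p.flip p.flip)

theorem factorization_F_lt_geq
    {K A B : Type*} [Field K] [Ring A] [Ring B]
    [Bialgebra K A] [Bialgebra K B]
    (p : A →ₗ[K] Module.Dual K B)
    -- bialgebra pairing axiom: ⟨a'a'', b⟩ = ⟨a',b₂⟩⟨a'',b₁⟩
    (hpair2 : ∀ (a a' : A) (b : B),
      p (a * a') b = pair2' p (Coalgebra.comul (R := K) b) (a' ⊗ₜ[K] a))
    -- slope subalgebras
    (A1 A2 : Subalgebra K A) (B1 B2 : Subalgebra K B)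
    -- the pairing factorizes along the slope decompositions
    (hfact : ∀ e' ∈ A1, ∀ e ∈ A2, ∀ f ∈ B1, ∀ f' ∈ B2,
      p (e' * e) (f * f') = p e' f * p e f')
    -- non-degeneracy of the full pairing
    (hnondeg : ∀ b : B, (∀ a : A, p a b = 0) → b = 0)
    -- A = A₁ · A₂ : every element of A is a sum of products e'·e
    (hAspan : Submodule.span K {a : A | ∃ e' ∈ A1, ∃ e ∈ A2, a = e' * e} = ⊤)
    -- the projection [·]_{<p} : S^≤ → S⁻_{(-∞,p)}, defined via the perfect pairing with A₁
    (πlt : B →ₗ[K] B)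
    (hltmem : ∀ y : B, πlt y ∈ B1)
    (hltpair : ∀ y : B, ∀ e ∈ A1, p e (πlt y) = p e y)
    -- the projection [·]_{≥p} : S^≤ → S⁻_{[p,∞]}, defined via the perfect pairing with A₂
    (πgeq : B →ₗ[K] B)
    (hgeqmem : ∀ y : B, πgeq y ∈ B2)
    (hgeqpair : ∀ y : B, ∀ e ∈ A2, p e (πgeq y) = p e y) :
    ∀ F : B,
      (LinearMap.mul' K B)
        (TensorProduct.map πlt πgeq
          ((TensorProduct.comm K B B) (Coalgebra.comul (R := K) F))) = F := by
  intro F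
  set L : B := (LinearMap.mul' K B)
    (TensorProduct.map πlt πgeq
      ((TensorProduct.comm K B B) (Coalgebra.comul (R := K) F))) with hL
  have key : ∀ a : A, p a L = p a F := by
    have hgen : ∀ a ∈ {a : A | ∃ e' ∈ A1, ∃ e ∈ A2, a = e' * e},
        a ∈ LinearMap.ker (p.flip L - p.flip F) := by
      rintro a ⟨e', he', e, he, rfl⟩
      have main : ∀ T : B ⊗[K] B,
          p (e' * e) ((LinearMap.mul' K B)
            (TensorProduct.map πlt πgeq ((TensorProduct.comm K B B) T)))
            = pair2' p T (e ⊗ₜ[K] e') := by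
        intro T
        induction T using TensorProduct.induction_on with
        | zero => simp
        | tmul f f' =>
          have h1 : ((TensorProduct.comm K B B) (f ⊗ₜ[K] f')) = f' ⊗ₜ[K] f := rfl
          rw [h1, TensorProduct.map_tmul, LinearMap.mul'_apply]
          rw [hfact e' he' e he (πlt f') (hltmem f') (πgeq f) (hgeqmem f)]
          rw [hltpair f' e' he', hgeqpair f e he]
          simp [pair2', TensorProduct.dualDistrib_apply, mul_comm]
        | add x y hx hy => simp [map_add, hx, hy]
      have h2 := hpair2 e' e F
      simp only [LinearMap.mem_ker, LinearMap.sub_apply, LinearMap.flip_apply]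
      rw [hL, h2, main (Coalgebra.comul (R := K) F), sub_self]
    have hle : Submodule.span K {a : A | ∃ e' ∈ A1, ∃ e ∈ A2, a = e' * e}
        ≤ LinearMap.ker (p.flip L - p.flip F) := Submodule.span_le.mpr hgen
    rw [hAspan, top_le_iff] at hle
    intro a
    have : (p.flip L - p.flip F) a = 0 := by
      rw [LinearMap.ker_eq_top.mp hle]; rfl
    simpa [sub_eq_zero, LinearMap.flip_apply] using this
  have : L - F = 0 := by
    apply hnondeg
    intro a
    simp [key a]
  exact sub_eq_zero.mp this
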